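/- Assume the leaf-hash h : α → β is injective and the node combiner H : β → β → β is injective as a function on pairs. If π verifies element e at position i against root r, and π' verifies element e' at the same position i against the same root r, then e = e' and π = π'. (Uniqueness of Merkle membership proofs: for a fixed root and position there is at most one verifying element and proof.) -/
import Mathlib


variable {α β : Type*}

/-- Verification fold of a membership proof `π` (a vector of `d` hashes) for element `e`
at position `i`: `v 0 = h e`, and `v (k+1) = H (π k) (v k)` if the `k`-th bit of `i` is 1,
else `v (k+1) = H (v k) (π k)`. -/
def vfold (h : α → β) (H : β → β → β) (e : α) (i : ℕ) {d : ℕ} (π : Fin d → β) : ℕ → β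
  | 0 => h e
  | k + 1 =>
    if hk : k < d then
      if i.testBit k then H (π ⟨k, hk⟩) (vfold h H e i π k)
      else H (vfold h H e i π k) (π ⟨k, hk⟩)
    else vfold h H e i π k

/-- The membership proof `π` verifies element `e` at position `i` against root `r`. -/
def Verifies (h : α → β) (H : β → β → β) {d : ℕ} (π : Fin d → β) (e : α)
    (i : Fin (2 ^ d)) (r : β) : Prop :=
  vfold h H e i.val π d = r


/-- Uniqueness of Merkle membership proofs: for injective `h` and `H`, a fixed root and
position admit at most one verifying element and proof. -/
theorem membership_unique (h : α → β) (H : β → β → β)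
    (hinj : Function.Injective h)
    (Hinj : Function.Injective fun p : β × β => H p.1 p.2)
    {d : ℕ} (π π' : Fin d → β) (e e' : α) (i : Fin (2 ^ d)) (r : β)
    (h1 : Verifies h H π e i r) (h2 : Verifies h H π' e' i r) :
    e = e' ∧ π = π' := by
  have key : ∀ k, k ≤ d → vfold h H e i.val π k = vfold h H e' i.val π' k →
      e = e' ∧ ∀ j : Fin d, (j : ℕ) < k → π j = π' j := by
    intro k
    induction k with
    | zero =>
      intro _ hv
      exact ⟨hinj hv, fun j hj => absurd hj (Nat.not_lt_zero _)⟩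
    | succ k ih =>
      intro hk hv
      have hkd : k < d := hk
      rw [vfold, vfold, dif_pos hkd, dif_pos hkd] at hv
      by_cases hb : (i : ℕ).testBit k
      · rw [if_pos hb, if_pos hb] at hv
        have hp := Hinj (a₁ := (π ⟨k, hkd⟩, vfold h H e i.val π k))
          (a₂ := (π' ⟨k, hkd⟩, vfold h H e' i.val π' k)) hv
        obtain ⟨hp1, hp2⟩ := Prod.mk.injEq .. ▸ hp
        obtain ⟨he, hrest⟩ := ih (Nat.le_of_succ_le hk) hp2
        refine ⟨he, fun j hj => ?_⟩
        rcases Nat.lt_succ_iff_lt_or_eq.mp hj with hj | hj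
        · exact hrest j hj
        · have : j = ⟨k, hkd⟩ := Fin.ext hj
          rw [this]; exact hp1
      · rw [if_neg hb, if_neg hb] at hv
        have hp := Hinj (a₁ := (vfold h H e i.val π k, π ⟨k, hkd⟩))
          (a₂ := (vfold h H e' i.val π' k, π' ⟨k, hkd⟩)) hv
        obtain ⟨hp2, hp1⟩ := Prod.mk.injEq .. ▸ hp
        obtain ⟨he, hrest⟩ := ih (Nat.le_of_succ_le hk) hp2
        refine ⟨he, fun j hj => ?_⟩
        rcases Nat.lt_succ_iff_lt_or_eq.mp hj with hj | hj
        · exact hrest j hj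
        · have : j = ⟨k, hkd⟩ := Fin.ext hj
          rw [this]; exact hp1
  obtain ⟨he, hπ⟩ := key d le_rfl (h1.trans h2.symm)
  exact ⟨he, funext fun j => hπ j j.isLt⟩
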